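/- arXiv:1411.3090 — 3 statements merged into one kernel-verified Lean document; each statement's English description precedes it below -/
import Mathlib

section
/- Let P and Q be coprime positive integers, and let r_0 = P, r_1 = Q, q_j = ⌊r_{j-1}/r_j⌋, r_{j+1} = r_{j-1} - q_j·r_j be the Euclidean quotient–remainder sequence, with n the least index such that r_{n+1} = 0. Then the sum of q_k·r_k over the odd indices k with 1 ≤ k ≤ n equals P when n is odd, and equals P - 1 when n is even. -/
open Finset in
/-- For coprime positive integers `P`, `Q` and the Euclidean
quotient–remainder sequence `r 0 = P`, `r 1 = Q`, `q j = r (j-1) / r j`,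
`r (j+1) = r (j-1) - q j * r j`, with `n` the least index such that
`r (n+1) = 0`, the sum of `q k * r k` over odd indices `k` with
`1 ≤ k ≤ n` equals `P` when `n` is odd, and `P - 1` when `n` is even. -/
theorem sum_odd_indices_quotient_mul_remainder
    (P Q : ℕ) (hP : 0 < P) (hQ : 0 < Q) (hPQ : Nat.Coprime P Q)
    (r q : ℕ → ℕ)
    (hr0 : r 0 = P) (hr1 : r 1 = Q)
    (hq : ∀ j, 1 ≤ j → q j = r (j - 1) / r j)
    (hrec : ∀ j, 1 ≤ j → r (j + 1) = r (j - 1) - q j * r j)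
    (n : ℕ) (hn : r (n + 1) = 0)
    (hleast : ∀ m, m < n → r (m + 1) ≠ 0) :
    ∑ k ∈ (Finset.Icc 1 n).filter (fun k => Odd k), q k * r k =
      if Odd n then P else P - 1 := by
  -- key step identity: q (j+1) * r (j+1) + r (j+2) = r j
  have hstep : ∀ j : ℕ, q (j + 1) * r (j + 1) + r (j + 2) = r j := by
    intro j
    have h1 := hrec (j + 1) (by omega)
    have h2 := hq (j + 1) (by omega)
    simp only [Nat.add_sub_cancel] at h1 h2
    rw [h2] at h1 ⊢
    have hle : (r j / r (j + 1)) * r (j + 1) ≤ r j := Nat.div_mul_le_self _ _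
    generalize (r j / r (j + 1)) * r (j + 1) = x at h1 hle ⊢
    have h1' : r (j + 2) = r j - x := h1
    omega
  -- remainder identity: r (j+2) = r j % r (j+1)
  have hmod : ∀ j : ℕ, r (j + 2) = r j % r (j + 1) := by
    intro j
    have h1 := hrec (j + 1) (by omega)
    have h2 := hq (j + 1) (by omega)
    simp only [Nat.add_sub_cancel] at h1 h2
    rw [h2] at h1
    have h3 := Nat.div_add_mod (r j) (r (j + 1))
    rw [Nat.mul_comm] at h3
    generalize (r j / r (j + 1)) * r (j + 1) = x at h1 h3
    have h1' : r (j + 2) = r j - x := h1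
    omega
  -- telescoping
  have htel : ∀ m : ℕ,
      (∑ k ∈ (Finset.Icc 1 m).filter (fun k => Odd k), q k * r k) +
        (if Odd m then r (m + 1) else r m) = r 0 := by
    intro m
    induction m with
    | zero => simp
    | succ m ih =>
      have hins : Finset.Icc 1 (m + 1) = insert (m + 1) (Finset.Icc 1 m) := by
        ext x; simp [Finset.mem_Icc, Finset.mem_insert]; omega
      rw [hins, Finset.filter_insert]
      by_cases hodd : Odd (m + 1)
      · have hnodd : ¬ Odd m := by
          rcases hodd with ⟨t, ht⟩; rintro ⟨s, hs⟩; omega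
        rw [if_pos hodd, Finset.sum_insert (by simp)]
        simp only [if_pos hodd, if_neg hnodd] at *
        have h := hstep m
        rw [show m + 1 + 1 = m + 2 from rfl]
        omega
      · have hodd' : Odd m := by
          rcases Nat.even_or_odd m with h | h
          · exact absurd (by rcases h with ⟨t, ht⟩; exact ⟨t, by omega⟩) hodd
          · exact h
        rw [if_neg hodd]
        simp only [if_neg hodd, if_pos hodd'] at *
        omega
  -- n ≥ 1
  have hn1 : 1 ≤ n := by
    by_contra h
    interval_cases n
    simp [hr1] at hn
    omega
  -- gcd invariant: r n = 1
  have hgcd : ∀ j, j ≤ n → Nat.gcd (r j) (r (j + 1)) = 1 := by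
    intro j
    induction j with
    | zero => intro _; rw [hr0, hr1]; exact hPQ
    | succ j ih =>
      intro hj
      have ih' := ih (by omega)
      have hpos : r (j + 1) ≠ 0 := hleast j (by omega)
      rw [hmod j, Nat.gcd_comm]
      rw [← Nat.gcd_rec, Nat.gcd_comm]
      exact ih'
  have hrn : r n = 1 := by
    have := hgcd n (le_refl n)
    rw [hn] at this
    simpa using this
  have := htel n
  by_cases hodd : Odd n
  · rw [if_pos hodd]
    rw [if_pos hodd, hn, hr0] at this
    omega
  · rw [if_neg hodd]
    rw [if_neg hodd, hrn, hr0] at this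
    omega
end

section
/- Let P and Q be coprime positive integers, and let r_0 = P, r_1 = Q, q_j = ⌊r_{j-1}/r_j⌋, r_{j+1} = r_{j-1} - q_j·r_j be the Euclidean quotient–remainder sequence, with n the least index such that r_{n+1} = 0. Then the sum of q_k·r_k over the even indices k with 1 ≤ k ≤ n equals Q - 1 when n is odd, and equals Q when n is even. -/
open Finset in
private lemma tele_aux (a : ℕ → ℕ) (ha : ∀ i, a (i + 1) ≤ a i) :
    ∀ m, ∑ i ∈ Finset.range m, (a i - a (i + 1)) = a 0 - a m := by
  intro m
  induction m with
  | zero => simp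
  | succ m ih =>
    rw [Finset.sum_range_succ, ih]
    have h1 : a (m + 1) ≤ a m := ha m
    have h2 : a m ≤ a 0 := by
      clear h1 ih
      induction m with
      | zero => exact le_refl _
      | succ k ihk => exact le_trans (ha k) ihk
    omega

open Finset in
/-- For coprime positive integers `P`, `Q` and the Euclidean
quotient–remainder sequence `r 0 = P`, `r 1 = Q`, `q j = r (j-1) / r j`,
`r (j+1) = r (j-1) - q j * r j`, with `n` the least index such that
`r (n+1) = 0`, the sum of `q k * r k` over even indices `k` with
`1 ≤ k ≤ n` equals `Q - 1` when `n` is odd, and `Q` when `n` is even. -/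
theorem sum_even_indices_quotient_mul_remainder
    (P Q : ℕ) (hP : 0 < P) (hQ : 0 < Q) (hPQ : Nat.Coprime P Q)
    (r q : ℕ → ℕ)
    (hr0 : r 0 = P) (hr1 : r 1 = Q)
    (hq : ∀ j, 1 ≤ j → q j = r (j - 1) / r j)
    (hrec : ∀ j, 1 ≤ j → r (j + 1) = r (j - 1) - q j * r j)
    (n : ℕ) (hn : r (n + 1) = 0)
    (hleast : ∀ m, m < n → r (m + 1) ≠ 0) :
    ∑ k ∈ (Finset.Icc 1 n).filter (fun k => Even k), q k * r k =
      if Odd n then Q - 1 else Q := by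
  -- key identity: q j * r j = r (j-1) - r (j+1), for j ≥ 1
  have hle : ∀ j, 1 ≤ j → q j * r j ≤ r (j - 1) := by
    intro j hj
    rw [hq j hj]
    exact Nat.div_mul_le_self _ _
  have hkey : ∀ j, 1 ≤ j → q j * r j = r (j - 1) - r (j + 1) := by
    intro j hj
    have h1 := hrec j hj
    have h2 := hle j hj
    omega
  have hmono : ∀ j, 1 ≤ j → r (j + 1) ≤ r (j - 1) := by
    intro j hj; rw [hrec j hj]; exact Nat.sub_le _ _
  -- positivity of r j for j ≤ n
  have hpos : ∀ j, j ≤ n → 0 < r j := by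
    intro j hj
    rcases Nat.eq_zero_or_pos j with h0 | h1
    · subst h0; rw [hr0]; exact hP
    · have := hleast (j - 1) (by omega)
      have hj1 : j - 1 + 1 = j := by omega
      rw [hj1] at this
      omega
  -- the mod identity
  have hmod : ∀ j, 1 ≤ j → r (j + 1) = r (j - 1) % r j := by
    intro j hj
    have h1 := hrec j hj
    have h2 := hq j hj
    rcases Nat.eq_zero_or_pos (r j) with h0 | hp
    · rw [h0] at h2 ⊢
      simp at h2 ⊢
      rw [h2] at h1
      simp at h1
      omega
    · have h3 := Nat.div_add_mod (r (j - 1)) (r j)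
      rw [Nat.mul_comm] at h3
      rw [h1, h2]
      omega
  -- gcd invariant gives r n = 1
  have hgcd : ∀ j, j ≤ n → Nat.gcd (r j) (r (j + 1)) = 1 := by
    intro j
    induction j with
    | zero => intro _; rw [hr0, hr1]; exact hPQ
    | succ k ih =>
      intro hk
      have h1 := ih (by omega)
      have h2 := hmod (k + 1) (by omega)
      simp only [Nat.add_sub_cancel] at h2
      rw [h2, Nat.gcd_comm, ← Nat.gcd_rec, Nat.gcd_comm]
      exact h1
  have hn1 : 1 ≤ n := by
    by_contra h
    have : n = 0 := by omega
    subst this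
    rw [hr1] at hn; omega
  have hrn : r n = 1 := by
    have := hgcd n le_rfl
    rw [hn, Nat.gcd_zero_right] at this
    exact this
  -- reindex sum: even k in [1,n] ↔ k = 2*i+2, i ∈ range (n/2)
  have hre : ∑ k ∈ (Finset.Icc 1 n).filter (fun k => Even k), q k * r k
      = ∑ i ∈ Finset.range (n / 2), q (2 * i + 2) * r (2 * i + 2) := by
    apply Finset.sum_nbij' (fun k => k / 2 - 1) (fun i => 2 * i + 2)
    · intro k hk
      simp only [Finset.mem_filter, Finset.mem_Icc] at hk
      obtain ⟨⟨h1, h2⟩, he⟩ := hk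
      obtain ⟨c, hc⟩ := he
      simp only [Finset.mem_range]
      have : k / 2 ≤ n / 2 := Nat.div_le_div_right h2
      omega
    · intro i hi
      simp only [Finset.mem_range] at hi
      simp only [Finset.mem_filter, Finset.mem_Icc]
      refine ⟨⟨by omega, ?_⟩, ⟨i + 1, by ring⟩⟩
      have : 2 * (i + 1) ≤ 2 * (n / 2) := by omega
      have := Nat.div_mul_le_self n 2
      omega
    · intro k hk
      simp only [Finset.mem_filter, Finset.mem_Icc] at hk
      obtain ⟨⟨h1, h2⟩, ⟨c, hc⟩⟩ := hk
      omega
    · intro i hi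
      omega
    · intro k hk
      simp only [Finset.mem_filter, Finset.mem_Icc] at hk
      obtain ⟨⟨h1, h2⟩, ⟨c, hc⟩⟩ := hk
      have hkk : 2 * (k / 2 - 1) + 2 = k := by omega
      rw [hkk]
  rw [hre]
  have hterm : ∀ i, q (2 * i + 2) * r (2 * i + 2)
      = r (2 * i + 1) - r (2 * i + 1 + 2) := by
    intro i
    have := hkey (2 * i + 2) (by omega)
    simpa using this
  calc ∑ i ∈ Finset.range (n / 2), q (2 * i + 2) * r (2 * i + 2)
      = ∑ i ∈ Finset.range (n / 2),
          ((fun i => r (2 * i + 1)) i - (fun i => r (2 * i + 1)) (i + 1)) := by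
        apply Finset.sum_congr rfl
        intro i _
        simp only
        rw [hterm i, show 2 * (i + 1) + 1 = 2 * i + 1 + 2 from by ring]
    _ = r 1 - r (2 * (n / 2) + 1) := by
        rw [tele_aux (fun i => r (2 * i + 1)) (fun i => by
          have h := hmono (2 * i + 2) (by omega)
          simp only [show 2 * i + 2 - 1 = 2 * i + 1 from by omega] at h
          show r (2 * (i + 1) + 1) ≤ r (2 * i + 1)
          have h2 : 2 * (i + 1) + 1 = 2 * i + 2 + 1 := by ring
          rw [h2]
          exact h)]
    _ = if Odd n then Q - 1 else Q := by
        rcases Nat.even_or_odd n with he | ho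
        · have h1 : 2 * (n / 2) + 1 = n + 1 := by
            obtain ⟨c, hc⟩ := he; omega
          rw [h1, hn, if_neg (by simpa using he), hr1]
          omega
        · have h1 : 2 * (n / 2) + 1 = n := by
            obtain ⟨c, hc⟩ := ho; omega
          rw [h1, hrn, if_pos ho, hr1]
end

section
/- Let P and Q be coprime positive integers, and let r_0 = P, r_1 = Q, q_j = ⌊r_{j-1}/r_j⌋, r_{j+1} = r_{j-1} - q_j·r_j be the Euclidean quotient–remainder sequence, with n the least index such that r_{n+1} = 0. Define the dot count D = (Σ over odd k with 1 ≤ k < n of q_k·r_k) + (q_n - 1 if n is odd, else 0) and the box count B = (Σ over even k with 1 ≤ k < n of q_k·r_k) + (q_n - 1 if n is even, else 0). Then D = P - 1 and B = Q - 1; that is, the standard position box-dot diagram of q = P/Q contains exactly P - 1 dots and Q - 1 boxes. -/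
open Finset in
lemma boxdot_shift_filter_sum (f : ℕ → ℕ) (p : ℕ → Prop) [DecidablePred p] (a b : ℕ) :
    ∑ k ∈ (Finset.Ico (a+1) (b+1)).filter p, f k
      = ∑ k ∈ (Finset.Ico a b).filter (fun k => p (k+1)), f (k+1) := by
  rw [← Finset.map_add_right_Ico a b 1, Finset.filter_map, Finset.sum_map]
  rfl

open Finset in
lemma boxdot_aux : ∀ (n : ℕ) (r q : ℕ → ℕ), 0 < r 0 → 0 < r 1 →
    Nat.Coprime (r 0) (r 1) →
    (∀ j, 1 ≤ j → q j = r (j - 1) / r j) →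
    (∀ j, 1 ≤ j → r (j + 1) = r (j - 1) - q j * r j) →
    r (n + 1) = 0 → (∀ m, m < n → r (m + 1) ≠ 0) →
    (∑ k ∈ (Finset.Ico 1 n).filter (fun k => Odd k), q k * r k) +
        (if Odd n then q n - 1 else 0) = r 0 - 1 ∧
    (∑ k ∈ (Finset.Ico 1 n).filter (fun k => Even k), q k * r k) +
        (if Even n then q n - 1 else 0) = r 1 - 1 := by
  intro n
  induction n with
  | zero =>
    intro r q h0 h1 _ _ _ hn _
    exact absurd (by simpa using hn) h1.ne'
  | succ n IH =>
    intro r q h0 h1 hcop hq hrec hn hleast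
    -- basic facts
    have hq1 : q 1 = r 0 / r 1 := hq 1 le_rfl
    have hr2 : r 2 = r 0 - q 1 * r 1 := hrec 1 le_rfl
    have hmul_le : q 1 * r 1 ≤ r 0 := by
      rw [hq1]; exact Nat.div_mul_le_self _ _
    have hr2mod : r 2 = r 0 % r 1 := by
      have := Nat.mod_add_div (r 0) (r 1)
      rw [hr2, hq1, mul_comm]; omega
    rcases Nat.eq_zero_or_pos n with hn0 | hnpos
    · -- n + 1 = 1 : base case
      subst hn0
      have h2 : r 2 = 0 := hn
      have hdvd : r 1 ∣ r 0 := by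
        rw [hr2mod] at h2
        exact Nat.dvd_of_mod_eq_zero h2
      have hr1one : r 1 = 1 := by
        have h : r 1 ∣ Nat.gcd (r 0) (r 1) := Nat.dvd_gcd hdvd dvd_rfl
        rw [hcop] at h
        exact Nat.eq_one_of_dvd_one h
      have hq1' : q 1 = r 0 := by rw [hq1, hr1one, Nat.div_one]
      simp [hq1', hr1one]
    · -- n + 1 ≥ 2 : inductive step
      have hr2pos : 0 < r 2 := by
        have h := hleast 1 (by omega)
        norm_num at h
        omega
      have hcop' : Nat.Coprime (r 1) (r 2) := by
        rw [hr2mod]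
        have : Nat.gcd (r 1) (r 0 % r 1) = Nat.gcd (r 0 % r 1) (r 1) :=
          Nat.gcd_comm _ _
        unfold Nat.Coprime
        rw [this, ← Nat.gcd_rec]
        exact hcop.symm
      have IH' := IH (fun j => r (j + 1)) (fun j => q (j + 1)) h1 hr2pos hcop'
        (fun j hj => by
          have hj' : j - 1 + 1 = j := by omega
          simp only [hj']
          simpa using hq (j + 1) (by omega))
        (fun j hj => by
          have hj' : j - 1 + 1 = j := by omega
          simp only [hj']
          simpa using hrec (j + 1) (by omega))
        (by simpa using hn)
        (fun m hm => by
          have := hleast (m + 1) (by omega)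
          simpa using this)
      obtain ⟨IHodd, IHeven⟩ := IH'
      constructor
      · -- dot count
        rw [Finset.sum_filter, Finset.sum_eq_sum_Ico_succ_bot (by omega : (1:ℕ) < n + 1),
          ← Finset.sum_filter]
        have hshift : ∑ k ∈ (Finset.Ico (1+1) (n+1)).filter (fun k => Odd k), q k * r k
            = ∑ k ∈ (Finset.Ico 1 n).filter (fun k => Odd (k+1)), q (k+1) * r (k+1) := by
          exact boxdot_shift_filter_sum (fun k => q k * r k) (fun k => Odd k) 1 n
        have hpar : (Finset.Ico 1 n).filter (fun k => Odd (k+1))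
            = (Finset.Ico 1 n).filter (fun k => Even k) := by
          apply Finset.filter_congr
          intro x _
          simp [Nat.even_add_one, Nat.odd_add_one]
        rw [show (1:ℕ)+1 = 2 from rfl] at hshift
        have hifpar : (if Odd (n+1) then q (n+1) - 1 else 0)
            = (if Even n then q (n+1) - 1 else 0) := by
          simp [Nat.odd_add_one]
        rw [if_pos (by decide : Odd 1), hshift, hpar, hifpar]
        have : ∑ k ∈ (Finset.Ico 1 n).filter (fun k => Even k), q (k+1) * r (k+1)
            + (if Even n then q (n+1) - 1 else 0) = r 2 - 1 := IHeven
        omega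
      · -- box count
        rw [Finset.sum_filter, Finset.sum_eq_sum_Ico_succ_bot (by omega : (1:ℕ) < n + 1),
          ← Finset.sum_filter]
        have hshift : ∑ k ∈ (Finset.Ico (1+1) (n+1)).filter (fun k => Even k), q k * r k
            = ∑ k ∈ (Finset.Ico 1 n).filter (fun k => Even (k+1)), q (k+1) * r (k+1) := by
          exact boxdot_shift_filter_sum (fun k => q k * r k) (fun k => Even k) 1 n
        have hpar : (Finset.Ico 1 n).filter (fun k => Even (k+1))
            = (Finset.Ico 1 n).filter (fun k => Odd k) := by
          apply Finset.filter_congr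
          intro x _
          simp [Nat.even_add_one, Nat.not_even_iff_odd]
        rw [show (1:ℕ)+1 = 2 from rfl] at hshift
        have hifpar : (if Even (n+1) then q (n+1) - 1 else 0)
            = (if Odd n then q (n+1) - 1 else 0) := by
          simp [Nat.even_add_one, Nat.not_even_iff_odd]
        rw [if_neg (by decide : ¬ Even 1), hshift, hpar, hifpar]
        have : ∑ k ∈ (Finset.Ico 1 n).filter (fun k => Odd k), q (k+1) * r (k+1)
            + (if Odd n then q (n+1) - 1 else 0) = r 1 - 1 := IHodd
        omega

open Finset in
/-- For coprime positive integers `P`, `Q` and the Euclidean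
quotient–remainder sequence `r 0 = P`, `r 1 = Q`, `q j = r (j-1) / r j`,
`r (j+1) = r (j-1) - q j * r j`, with `n` the least index such that
`r (n+1) = 0`, the dot count
`D = (Σ over odd k with 1 ≤ k < n of q k * r k) + (qₙ - 1 if n odd, else 0)`
and the box count
`B = (Σ over even k with 1 ≤ k < n of q k * r k) + (qₙ - 1 if n even, else 0)`
satisfy `D = P - 1` and `B = Q - 1`: the standard position box-dot diagram of
`q = P/Q` contains exactly `P - 1` dots and `Q - 1` boxes. -/
theorem boxdot_diagram_dot_and_box_count
    (P Q : ℕ) (hP : 0 < P) (hQ : 0 < Q) (hPQ : Nat.Coprime P Q)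
    (r q : ℕ → ℕ)
    (hr0 : r 0 = P) (hr1 : r 1 = Q)
    (hq : ∀ j, 1 ≤ j → q j = r (j - 1) / r j)
    (hrec : ∀ j, 1 ≤ j → r (j + 1) = r (j - 1) - q j * r j)
    (n : ℕ) (hn : r (n + 1) = 0)
    (hleast : ∀ m, m < n → r (m + 1) ≠ 0) :
    (∑ k ∈ (Finset.Ico 1 n).filter (fun k => Odd k), q k * r k) +
        (if Odd n then q n - 1 else 0) = P - 1 ∧
    (∑ k ∈ (Finset.Ico 1 n).filter (fun k => Even k), q k * r k) +
        (if Even n then q n - 1 else 0) = Q - 1 := by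
  have := boxdot_aux n r q (hr0 ▸ hP) (hr1 ▸ hQ) (by rw [hr0, hr1]; exact hPQ)
    hq hrec hn hleast
  rw [hr0, hr1] at this
  exact this
end
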